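/- Let a > 0 and let φ : [0,a] → ℝ be a strictly increasing, concave, continuous function with φ(0) = 0 and φ(a) = 1. Then the norm of the Lorentz space Λ(φ)[0,a] is strictly monotone: if x, y ∈ Λ(φ), |x(t)| ≤ |y(t)| for a.e. t ∈ [0,a], and the set {t ∈ [0,a] : |x(t)| < |y(t)|} has positive measure, then ‖x‖_{Λ(φ)} < ‖y‖_{Λ(φ)}. -/

import Mathlib

open MeasureTheory Set Filter Topology
open scoped ENNReal NNReal Classical

noncomputable section

/-- The distribution function `m {s ∈ [0,a] : τ < ‖f s‖}` of `f` on `[0,a]`. -/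
def distrib {E : Type*} [NormedAddCommGroup E] (a : ℝ) (f : ℝ → E) (τ : ℝ) : ℝ≥0∞ :=
  volume {s ∈ Set.Icc (0:ℝ) a | τ < ‖f s‖}

/-- The decreasing rearrangement `f*` of `f` on `[0,a]`:
`f*(t) = inf {τ ≥ 0 : m {s ∈ [0,a] : ‖f s‖ > τ} ≤ t}`. -/
def rearr {E : Type*} [NormedAddCommGroup E] (a : ℝ) (f : ℝ → E) (t : ℝ) : ℝ :=
  sInf {τ : ℝ | 0 ≤ τ ∧ distrib a f τ ≤ ENNReal.ofReal t}

/-- The clamp of `t : ℝ` to the interval `[0,a]`. -/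
def clampIcc (a t : ℝ) : ℝ := min (max t 0) a

lemma clampIcc_mem (a t : ℝ) (ha : 0 ≤ a) : clampIcc a t ∈ Set.Icc (0:ℝ) a :=
  ⟨le_min (le_max_right t 0) ha, min_le_right _ _⟩

lemma clampIcc_mono (a : ℝ) : Monotone (clampIcc a) := fun _ _ hst =>
  min_le_min (max_le_max hst le_rfl) le_rfl

lemma clampIcc_continuous (a : ℝ) : Continuous (clampIcc a) :=
  (continuous_id.max continuous_const).min continuous_const

/-- The Stieltjes integrator associated with an increasing continuous function `φ` on `[0,a]`
(extended to all of `ℝ` as a constant outside `[0,a]`).  Its Lebesgue–Stieltjes measure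
realizes the integrals `∫₀^a ⋯ dφ(t)`. -/
def stieltjesOfOn (φ : ℝ → ℝ) (a : ℝ) : StieltjesFunction ℝ :=
  if h : 0 ≤ a ∧ MonotoneOn φ (Set.Icc 0 a) ∧ ContinuousOn φ (Set.Icc 0 a) then
    { toFun := fun t => φ (clampIcc a t)
      mono' := fun s t hst =>
        h.2.1 (clampIcc_mem a s h.1) (clampIcc_mem a t h.1) (clampIcc_mono a hst)
      right_continuous' := fun t =>
        ((h.2.2.comp_continuous (clampIcc_continuous a)
          (fun x => clampIcc_mem a x h.1)).continuousAt).continuousWithinAt }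
  else StieltjesFunction.id

/-- The Lorentz space functional `‖f‖_{Λ(φ)} = ∫₀^a f*(t) dφ(t)` (with values in `ℝ≥0∞`). -/
def eLorentzNorm {E : Type*} [NormedAddCommGroup E] (φ : ℝ → ℝ) (a : ℝ) (f : ℝ → E) : ℝ≥0∞ :=
  ∫⁻ t in Set.Ioc (0:ℝ) a, ENNReal.ofReal (rearr a f t) ∂(stieltjesOfOn φ a).measure

/-- Membership in the Lorentz space `Λ(φ)[0,a]`. -/
def MemLorentz {E : Type*} [NormedAddCommGroup E] [MeasurableSpace E]
    (φ : ℝ → ℝ) (a : ℝ) (f : ℝ → E) : Prop :=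
  Measurable f ∧ eLorentzNorm φ a f < ⊤

/-- The Hardy–Lorentz space functional
`‖f‖_{H(Λ(φ))} = sup_{0 ≤ r < 1} ‖t ↦ f (r e^{it})‖_{Λ(φ)}` for functions on the unit disk. -/
def eHLNorm (φ : ℝ → ℝ) (f : ℂ → ℂ) : ℝ≥0∞ :=
  ⨆ r ∈ Set.Ico (0:ℝ) 1,
    eLorentzNorm φ (2 * Real.pi)
      (fun t : ℝ => f (Complex.ofReal r * Complex.exp (Complex.I * Complex.ofReal t)))

/-- The classical `H¹` functional `‖f‖_{H¹} = sup_{0 ≤ r < 1} (1/(2π)) ∫₀^{2π} |f(r e^{it})| dt`. -/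
def eH1Norm (f : ℂ → ℂ) : ℝ≥0∞ :=
  ⨆ r ∈ Set.Ico (0:ℝ) 1,
    (ENNReal.ofReal (2 * Real.pi))⁻¹ *
      ∫⁻ t in Set.Ioc (0:ℝ) (2 * Real.pi),
        ENNReal.ofReal ‖f (Complex.ofReal r * Complex.exp (Complex.I * Complex.ofReal t))‖

/-- `fb` is the boundary (radial limit) function of `f`: for a.e. `t ∈ [0,2π]`,
`f(r e^{it}) → fb t` as `r → 1⁻`.  (For `f ∈ H¹` such a function exists and coincides a.e.
with the nontangential limit `f̃`.) -/
def HasRadialLimits (f : ℂ → ℂ) (fb : ℝ → ℂ) : Prop :=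
  ∀ᵐ t ∂(volume.restrict (Set.Icc (0:ℝ) (2 * Real.pi))),
    Filter.Tendsto (fun r : ℝ => f (Complex.ofReal r * Complex.exp (Complex.I * Complex.ofReal t)))
      (nhdsWithin 1 (Set.Iio 1)) (nhds (fb t))

/-- `f` (with boundary function `fb`) is an outer function:
`f` is non-null and `ln |f 0| = (1/(2π)) ∫₀^{2π} ln |fb s| ds`. -/
def IsOuter (f : ℂ → ℂ) (fb : ℝ → ℂ) : Prop :=
  (∃ z ∈ Metric.ball (0:ℂ) 1, f z ≠ 0) ∧
    Real.log ‖f 0‖ =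
      (1 / (2 * Real.pi)) * ∫ s in Set.Ioc (0:ℝ) (2 * Real.pi), Real.log ‖fb s‖

/-- The set `E₊ = {t ∈ [0,a] : h t > 0}`. -/
def posSet (a : ℝ) (h : ℝ → ℝ) : Set ℝ := {t ∈ Set.Icc (0:ℝ) a | 0 < h t}

/-- The set `E₋ = {t ∈ [0,a] : h t < 0}`. -/
def negSet (a : ℝ) (h : ℝ → ℝ) : Set ℝ := {t ∈ Set.Icc (0:ℝ) a | h t < 0}

section AuxLemmas2


variable {a : ℝ} {f : ℝ → ℂ} {τ s t : ℝ}

lemma distrib_anti (a : ℝ) (f : ℝ → ℂ) : Antitone (distrib a f) := fun s t hst =>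
  measure_mono fun u hu => ⟨hu.1, hst.trans_lt hu.2⟩

lemma distrib_set_meas (hf : Measurable f) (τ : ℝ) :
    MeasurableSet {s ∈ Set.Icc (0:ℝ) a | τ < ‖f s‖} :=
  measurableSet_Icc.inter (measurableSet_lt measurable_const hf.norm)

lemma distrib_le_ofReal : distrib a f τ ≤ ENNReal.ofReal a := by
  calc distrib a f τ ≤ volume (Set.Icc (0:ℝ) a) := measure_mono (sep_subset _ _)
    _ = ENNReal.ofReal a := by rw [Real.volume_Icc, sub_zero]

lemma distrib_ne_top : distrib a f τ ≠ ∞ :=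
  (distrib_le_ofReal.trans_lt ENNReal.ofReal_lt_top).ne

lemma distrib_iSup (hf : Measurable f) (s : ℝ) :
    distrib a f s = ⨆ n : ℕ, distrib a f (s + ((n : ℝ) + 1)⁻¹) := by
  have hU : {u ∈ Set.Icc (0:ℝ) a | s < ‖f u‖}
      = ⋃ n : ℕ, {u ∈ Set.Icc (0:ℝ) a | s + ((n : ℝ) + 1)⁻¹ < ‖f u‖} := by
    ext u
    simp only [mem_iUnion, mem_sep_iff]
    constructor
    · rintro ⟨hu, h⟩
      obtain ⟨n, hn⟩ := exists_nat_one_div_lt (sub_pos.mpr h)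
      exact ⟨n, hu, by rw [one_div] at hn; linarith⟩
    · rintro ⟨n, hu, h⟩
      exact ⟨hu, lt_of_le_of_lt (le_add_of_nonneg_right (by positivity)) h⟩
  have hmono : Monotone fun n : ℕ => {u ∈ Set.Icc (0:ℝ) a | s + ((n : ℝ) + 1)⁻¹ < ‖f u‖} := by
    intro n m hnm u hu
    refine ⟨hu.1, lt_of_le_of_lt (add_le_add_right ?_ s) hu.2⟩
    exact inv_anti₀ (by positivity) (add_le_add_left (Nat.cast_le.mpr hnm) 1)
  rw [distrib, hU, (hmono.directed_le).measure_iUnion]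
  rfl

lemma distrib_exists_lt (hf : Measurable f) {c : ℝ≥0∞} (hc : 0 < c) :
    ∃ n : ℕ, distrib a f n < c := by
  by_contra hcon
  push_neg at hcon
  have hempty : (⋂ n : ℕ, {u ∈ Set.Icc (0:ℝ) a | (n : ℝ) < ‖f u‖}) = ∅ := by
    ext u
    simp only [mem_iInter, mem_sep_iff, mem_empty_iff_false, iff_false, not_forall]
    obtain ⟨n, hn⟩ := exists_nat_gt ‖f u‖
    exact ⟨n, fun h => absurd h.2 (not_lt.mpr hn.le)⟩
  have hanti : Antitone fun n : ℕ => {u ∈ Set.Icc (0:ℝ) a | (n : ℝ) < ‖f u‖} := fun n m hnm u hu =>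
    ⟨hu.1, lt_of_le_of_lt (Nat.cast_le.mpr hnm) hu.2⟩
  have hinter := Directed.measure_iInter (μ := volume)
    (s := fun n : ℕ => {u ∈ Set.Icc (0:ℝ) a | (n : ℝ) < ‖f u‖})
    (fun n => (distrib_set_meas hf _).nullMeasurableSet)
    hanti.directed_ge ⟨0, distrib_ne_top (τ := ((0:ℕ):ℝ))⟩
  rw [hempty, measure_empty] at hinter
  have : c ≤ 0 := hinter ▸ le_iInf fun n => hcon n
  exact absurd hc (not_lt.mpr this)

lemma rearr_nonneg (a : ℝ) (f : ℝ → ℂ) (t : ℝ) : 0 ≤ rearr a f t :=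
  Real.sInf_nonneg fun τ hτ => hτ.1

lemma lt_rearr_iff (hf : Measurable f) (hs : 0 ≤ s) (ht : 0 < t) :
    s < rearr a f t ↔ ENNReal.ofReal t < distrib a f s := by
  constructor
  · intro h
    by_contra hc
    push_neg at hc
    have hbdd : BddBelow {τ : ℝ | 0 ≤ τ ∧ distrib a f τ ≤ ENNReal.ofReal t} :=
      ⟨0, fun τ hτ => hτ.1⟩
    exact absurd (csInf_le hbdd ⟨hs, hc⟩) (not_le.mpr h)
  · intro h
    obtain ⟨n, hn⟩ := distrib_exists_lt (a := a) hf (ENNReal.ofReal_pos.mpr ht)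
    set S := {τ : ℝ | 0 ≤ τ ∧ distrib a f τ ≤ ENNReal.ofReal t} with hS
    have hSne : S.Nonempty := ⟨(n : ℝ), n.cast_nonneg, hn.le⟩
    by_contra hc
    push_neg at hc
    have hc' : sInf S ≤ s := hc
    have key : ∀ m : ℕ, distrib a f (s + ((m : ℝ) + 1)⁻¹) ≤ ENNReal.ofReal t := by
      intro m
      obtain ⟨τ, hτS, hτlt⟩ := Real.lt_sInf_add_pos hSne
        (by positivity : (0:ℝ) < ((m : ℝ) + 1)⁻¹)
      exact le_trans (distrib_anti a f (by linarith)) hτS.2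
    have : distrib a f s ≤ ENNReal.ofReal t := by
      rw [distrib_iSup hf]
      exact iSup_le key
    exact absurd h (not_lt.mpr this)

lemma rearr_antitoneOn (hf : Measurable f) : AntitoneOn (rearr a f) (Set.Ioc (0:ℝ) a) := by
  intro t ht t' ht' htt'
  obtain ⟨n, hn⟩ := distrib_exists_lt (a := a) hf (ENNReal.ofReal_pos.mpr ht.1)
  have hbdd : BddBelow {τ : ℝ | 0 ≤ τ ∧ distrib a f τ ≤ ENNReal.ofReal t'} :=
    ⟨0, fun τ hτ => hτ.1⟩
  have hne : ({τ : ℝ | 0 ≤ τ ∧ distrib a f τ ≤ ENNReal.ofReal t} : Set ℝ).Nonempty :=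
    ⟨(n : ℝ), n.cast_nonneg, hn.le⟩
  rw [rearr, rearr]
  apply csInf_le_csInf hbdd hne
  exact fun τ hτ => ⟨hτ.1, hτ.2.trans (ENNReal.ofReal_le_ofReal htt')⟩



variable {φ : ℝ → ℝ} {a : ℝ}

lemma stieltjesOfOn_apply (h0 : 0 ≤ a) (hm : MonotoneOn φ (Set.Icc 0 a))
    (hc : ContinuousOn φ (Set.Icc 0 a)) (t : ℝ) :
    stieltjesOfOn φ a t = φ (clampIcc a t) := by
  rw [stieltjesOfOn, dif_pos ⟨h0, hm, hc⟩]

lemma stieltjesOfOn_continuous (h0 : 0 ≤ a) (hm : MonotoneOn φ (Set.Icc 0 a))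
    (hc : ContinuousOn φ (Set.Icc 0 a)) :
    Continuous (stieltjesOfOn φ a) := by
  have heq : ⇑(stieltjesOfOn φ a) = fun t => φ (clampIcc a t) :=
    funext (stieltjesOfOn_apply h0 hm hc)
  rw [heq]
  exact hc.comp_continuous (clampIcc_continuous a) fun x => clampIcc_mem a x h0

lemma clampIcc_of_mem (h0 : 0 ≤ a) {d : ℝ} (hd : d ∈ Set.Icc (0:ℝ) a) : clampIcc a d = d := by
  rw [clampIcc, max_eq_left hd.1, min_eq_left hd.2]

lemma stieltjesOfOn_measure_Ioo (h0 : 0 ≤ a) (hm : MonotoneOn φ (Set.Icc 0 a))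
    (hc : ContinuousOn φ (Set.Icc 0 a)) (hφ0 : φ 0 = 0) {d : ℝ} (hd : d ∈ Set.Icc (0:ℝ) a) :
    (stieltjesOfOn φ a).measure (Set.Ioo 0 d) = ENNReal.ofReal (φ d) := by
  rw [StieltjesFunction.measure_Ioo]
  have hl : Function.leftLim (stieltjesOfOn φ a) d = stieltjesOfOn φ a d :=
    leftLim_eq_of_tendsto
      (((stieltjesOfOn_continuous h0 hm hc).tendsto d).mono_left nhdsWithin_le_nhds)
  rw [hl, stieltjesOfOn_apply h0 hm hc, stieltjesOfOn_apply h0 hm hc,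
    clampIcc_of_mem h0 hd, clampIcc_of_mem h0 ⟨le_refl 0, h0⟩, hφ0, sub_zero]


section MainAux

variable {φ : ℝ → ℝ} {a : ℝ} {f : ℝ → ℂ}

lemma eLorentzNorm_eq_lintegral_distrib (ha : 0 < a) (hm : MonotoneOn φ (Set.Icc 0 a))
    (hc : ContinuousOn φ (Set.Icc 0 a)) (hφ0 : φ 0 = 0) (hf : Measurable f) :
    eLorentzNorm φ a f
      = ∫⁻ s in Set.Ioi (0:ℝ), ENNReal.ofReal (φ ((distrib a f s).toReal)) := by
  rw [eLorentzNorm,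
    lintegral_eq_lintegral_meas_lt ((stieltjesOfOn φ a).measure.restrict (Set.Ioc 0 a))
      (Eventually.of_forall (rearr_nonneg a f))
      (aemeasurable_restrict_of_antitoneOn measurableSet_Ioc (rearr_antitoneOn hf))]
  apply setLIntegral_congr_fun measurableSet_Ioi
  intro s hs
  beta_reduce
  rw [Measure.restrict_apply' measurableSet_Ioc]
  set d := (distrib a f s).toReal with hd
  have hdmem : d ∈ Set.Icc (0:ℝ) a :=
    ⟨ENNReal.toReal_nonneg, ENNReal.toReal_le_of_le_ofReal ha.le distrib_le_ofReal⟩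
  have hset : {t : ℝ | s < rearr a f t} ∩ Set.Ioc 0 a = Set.Ioo 0 d := by
    ext t
    simp only [Set.mem_inter_iff, Set.mem_setOf_eq, Set.mem_Ioc, Set.mem_Ioo]
    constructor
    · rintro ⟨hst, ht0, _⟩
      exact ⟨ht0, (ENNReal.ofReal_lt_iff_lt_toReal ht0.le distrib_ne_top).mp
        ((lt_rearr_iff hf (le_of_lt hs) ht0).mp hst)⟩
    · rintro ⟨ht0, htd⟩
      exact ⟨(lt_rearr_iff hf (le_of_lt hs) ht0).mpr
        ((ENNReal.ofReal_lt_iff_lt_toReal ht0.le distrib_ne_top).mpr htd),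
        ht0, htd.le.trans hdmem.2⟩
  rw [hset, stieltjesOfOn_measure_Ioo ha.le hm hc hφ0 hdmem]

end MainAux

end AuxLemmas2

/-- If `φ` is strictly increasing, concave, continuous on `[0,a]` with
`φ 0 = 0`, `φ a = 1`, then the norm of `Λ(φ)[0,a]` is strictly monotone. -/
theorem lorentz_norm_strictly_monotone (a : ℝ) (ha : 0 < a) (φ : ℝ → ℝ)
    (hconc : ConcaveOn ℝ (Set.Icc 0 a) φ)
    (hcont : ContinuousOn φ (Set.Icc 0 a))
    (hmono : StrictMonoOn φ (Set.Icc 0 a))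
    (hφ0 : φ 0 = 0) (hφa : φ a = 1)
    (x y : ℝ → ℂ) (hx : MemLorentz φ a x) (hy : MemLorentz φ a y)
    (hle : ∀ᵐ t ∂(volume.restrict (Set.Icc (0:ℝ) a)), ‖x t‖ ≤ ‖y t‖)
    (hlt : 0 < volume {t ∈ Set.Icc (0:ℝ) a | ‖x t‖ < ‖y t‖}) :
    eLorentzNorm φ a x < eLorentzNorm φ a y := by
  obtain ⟨hxm, hxfin⟩ := hx
  obtain ⟨hym, _⟩ := hy
  have hm : MonotoneOn φ (Set.Icc 0 a) := hmono.monotoneOn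
  have hle' : ∀ᵐ t ∂(volume : Measure ℝ), t ∈ Set.Icc (0:ℝ) a → ‖x t‖ ≤ ‖y t‖ :=
    (ae_restrict_iff' measurableSet_Icc).mp hle
  -- distribution functions compare
  have hAB : ∀ s : ℝ, distrib a x s ≤ distrib a y s := by
    intro s
    apply measure_mono_ae
    filter_upwards [hle'] with u hu
    intro huS
    exact ⟨huS.1, lt_of_lt_of_le huS.2 (hu huS.1)⟩
  -- find a rational level with strict inequality
  obtain ⟨q, hq⟩ : ∃ q : ℚ, 0 < volume {t ∈ Set.Icc (0:ℝ) a | ‖x t‖ < (q:ℝ) ∧ (q:ℝ) < ‖y t‖} := by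
    by_contra hcon
    push_neg at hcon
    have hsub : {t ∈ Set.Icc (0:ℝ) a | ‖x t‖ < ‖y t‖}
        ⊆ ⋃ q : ℚ, {t ∈ Set.Icc (0:ℝ) a | ‖x t‖ < (q:ℝ) ∧ (q:ℝ) < ‖y t‖} := by
      intro t ht
      obtain ⟨q, hq1, hq2⟩ := exists_rat_btwn ht.2
      exact Set.mem_iUnion.mpr ⟨q, ht.1, hq1, hq2⟩
    have : volume {t ∈ Set.Icc (0:ℝ) a | ‖x t‖ < ‖y t‖} = 0 := by
      apply measure_mono_null hsub
      exact measure_iUnion_null fun q => le_antisymm (hcon q) zero_le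
    exact absurd this hlt.ne'
  set Eq := {t ∈ Set.Icc (0:ℝ) a | ‖x t‖ < (q:ℝ) ∧ (q:ℝ) < ‖y t‖} with hEq
  have hq0 : (0:ℝ) < q := by
    obtain ⟨t, ht⟩ := nonempty_of_measure_ne_zero hq.ne'
    exact lt_of_le_of_lt (norm_nonneg (x t)) ht.2.1
  have hEqmeas : MeasurableSet Eq :=
    measurableSet_Icc.inter
      ((measurableSet_lt hxm.norm measurable_const).inter
        (measurableSet_lt measurable_const hym.norm))
  -- strict inequality of distribution functions at q
  have hstrict : distrib a x (q:ℝ) < distrib a y (q:ℝ) := by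
    have hunion : volume ({t ∈ Set.Icc (0:ℝ) a | (q:ℝ) < ‖x t‖} ∪ Eq)
        ≤ distrib a y (q:ℝ) := by
      apply measure_mono_ae
      filter_upwards [hle'] with u hu
      rintro (huA | huE)
      · exact ⟨huA.1, lt_of_lt_of_le huA.2 (hu huA.1)⟩
      · exact ⟨huE.1, huE.2.2⟩
    have hdisj : Disjoint {t ∈ Set.Icc (0:ℝ) a | (q:ℝ) < ‖x t‖} Eq := by
      rw [Set.disjoint_left]
      rintro t ⟨_, ht⟩ ⟨_, ht', _⟩
      exact absurd ht (not_lt.mpr ht'.le)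
    rw [measure_union hdisj hEqmeas] at hunion
    calc distrib a x (q:ℝ) < distrib a x (q:ℝ) + volume Eq :=
          ENNReal.lt_add_right distrib_ne_top hq.ne'
      _ ≤ distrib a y (q:ℝ) := hunion
  -- right-continuity: find a small interval to the right of q
  obtain ⟨n, hn⟩ : ∃ n : ℕ, distrib a x (q:ℝ) < distrib a y ((q:ℝ) + ((n:ℝ) + 1)⁻¹) := by
    rw [distrib_iSup hym (q:ℝ)] at hstrict
    exact lt_iSup_iff.mp hstrict
  set ε : ℝ := ((n:ℝ) + 1)⁻¹ with hε
  have hεpos : 0 < ε := by positivity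
  -- pointwise comparison of the integrands
  have hmemd : ∀ (g : ℝ → ℂ) (s : ℝ), (distrib a g s).toReal ∈ Set.Icc (0:ℝ) a := fun g s =>
    ⟨ENNReal.toReal_nonneg, ENNReal.toReal_le_of_le_ofReal ha.le distrib_le_ofReal⟩
  have hptle : ∀ s : ℝ, ENNReal.ofReal (φ ((distrib a x s).toReal))
      ≤ ENNReal.ofReal (φ ((distrib a y s).toReal)) := fun s =>
    ENNReal.ofReal_le_ofReal (hm (hmemd x s) (hmemd y s)
      (ENNReal.toReal_mono distrib_ne_top (hAB s)))
  have hptlt : ∀ s ∈ Set.Ioo (q:ℝ) ((q:ℝ) + ε),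
      ENNReal.ofReal (φ ((distrib a x s).toReal))
        < ENNReal.ofReal (φ ((distrib a y s).toReal)) := by
    intro s hs
    have hABs : distrib a x s < distrib a y s := by
      calc distrib a x s ≤ distrib a x (q:ℝ) := distrib_anti a x hs.1.le
        _ < distrib a y ((q:ℝ) + ε) := hn
        _ ≤ distrib a y s := distrib_anti a y hs.2.le
    have htr : (distrib a x s).toReal < (distrib a y s).toReal :=
      (ENNReal.toReal_lt_toReal distrib_ne_top distrib_ne_top).mpr hABs
    have hφlt : φ ((distrib a x s).toReal) < φ ((distrib a y s).toReal) :=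
      hmono (hmemd x s) (hmemd y s) htr
    have hφpos : 0 < φ ((distrib a y s).toReal) := by
      have h0le : φ 0 ≤ φ ((distrib a x s).toReal) :=
        hm ⟨le_refl 0, ha.le⟩ (hmemd x s) ENNReal.toReal_nonneg
      rw [hφ0] at h0le
      linarith
    exact (ENNReal.ofReal_lt_ofReal_iff hφpos).mpr hφlt
  -- measurability of the y-integrand
  have hanti : Antitone fun s : ℝ => ENNReal.ofReal (φ ((distrib a y s).toReal)) := by
    intro s s' hss'
    exact ENNReal.ofReal_le_ofReal (hm (hmemd y s') (hmemd y s)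
      (ENNReal.toReal_mono distrib_ne_top (distrib_anti a y hss')))
  -- conclude
  rw [eLorentzNorm_eq_lintegral_distrib ha hm hcont hφ0 hxm,
    eLorentzNorm_eq_lintegral_distrib ha hm hcont hφ0 hym]
  apply lintegral_strict_mono_of_ae_le_of_ae_lt_on
    (hanti.measurable.aemeasurable)
    ?hfi (ae_of_all _ hptle) (s := Set.Ioo (q:ℝ) ((q:ℝ) + ε)) ?hμs
    (ae_of_all _ hptlt)
  case hfi =>
    rw [← eLorentzNorm_eq_lintegral_distrib ha hm hcont hφ0 hxm]
    exact hxfin.ne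
  case hμs =>
    rw [Measure.restrict_apply' measurableSet_Ioi]
    have : Set.Ioo (q:ℝ) ((q:ℝ) + ε) ∩ Set.Ioi 0 = Set.Ioo (q:ℝ) ((q:ℝ) + ε) := by
      apply Set.inter_eq_self_of_subset_left
      intro s hs
      exact lt_trans hq0 hs.1
    rw [this, Real.volume_Ioo]
    simp only [add_sub_cancel_left, ne_eq, ENNReal.ofReal_eq_zero, not_le]
    exact hεpos

end
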